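/- arXiv:1310.2104 — 2 statements merged into one kernel-verified Lean document; each statement's English description precedes it below -/
import Mathlib

section
/- For every positive integer n, the derivative formula d/dx CP_n^{(k)}(x;λ,μ) = n! · Σ_{l=0}^{n-1} ((-1)^{n-l} / ((n-l)·l!)) · CP_l^{(k)}(x;λ,μ) holds. -/
open PowerSeries Finset

noncomputable section

/-- The formal power series log(1+t). -/
def logS : PowerSeries ℝ :=
  PowerSeries.mk fun n => if n = 0 then 0 else (-1) ^ (n + 1) / n

/-- Composition of formal power series (valid when `g` has zero constant term). -/
def compS (f g : PowerSeries ℝ) : PowerSeries ℝ :=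
  PowerSeries.mk fun n =>
    ∑ m ∈ Finset.range (n + 1), (PowerSeries.coeff m f) * PowerSeries.coeff n (g ^ m)

/-- The formal power series (1+t)^x = Σ (x)_n t^n / n!. -/
def onePow (x : ℝ) : PowerSeries ℝ :=
  PowerSeries.mk fun n => (descPochhammer ℝ n).eval x / n.factorial

/-- The polylogarithm factorial function Lif_k(t) = Σ t^n/(n!(n+1)^k). -/
def Lif (k : ℤ) : PowerSeries ℝ :=
  PowerSeries.mk fun n => 1 / (n.factorial * ((n : ℝ) + 1) ^ k)

/-- The Peters factor (1+(1+t)^λ)^(-μ) = 2^(-μ) exp(-μ log(1 + ((1+t)^λ - 1)/2)). -/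
def peters (lam mu : ℝ) : PowerSeries ℝ :=
  PowerSeries.C ((2 : ℝ) ^ (-mu)) *
    compS (PowerSeries.exp ℝ)
      (PowerSeries.C (-mu) * compS logS (PowerSeries.C (R := ℝ) (1 / 2) * (onePow lam - 1)))

/-- The Peters polynomials S_n(x;λ,μ). -/
def petersPoly (lam mu x : ℝ) (n : ℕ) : ℝ :=
  n.factorial * PowerSeries.coeff n (peters lam mu * onePow x)

/-- Poly-Cauchy polynomials of the first kind C_n^{(k)}(x). -/
def pC (k : ℤ) (x : ℝ) (n : ℕ) : ℝ :=
  n.factorial * PowerSeries.coeff n (compS (Lif k) logS * onePow (-x))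

/-- Poly-Cauchy polynomials of the second kind Ĉ_n^{(k)}(x). -/
def pChat (k : ℤ) (x : ℝ) (n : ℕ) : ℝ :=
  n.factorial * PowerSeries.coeff n (compS (Lif k) (-logS) * onePow x)

/-- The poly-Cauchy of the first kind and Peters mixed-type polynomials CP_n^{(k)}(x;λ,μ). -/
def CP (k : ℤ) (lam mu x : ℝ) (n : ℕ) : ℝ :=
  n.factorial * PowerSeries.coeff n (peters lam mu * compS (Lif k) logS * onePow (-x))

/-- The poly-Cauchy of the second kind and Peters mixed-type polynomials ĈP_n^{(k)}(x;λ,μ). -/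
def CPhat (k : ℤ) (lam mu x : ℝ) (n : ℕ) : ℝ :=
  n.factorial * PowerSeries.coeff n (peters lam mu * compS (Lif k) (-logS) * onePow x)

/-- Signed Stirling numbers of the first kind: (x)_n = Σ_l s(n,l) x^l. -/
def stirS (n l : ℕ) : ℝ := (descPochhammer ℝ n).coeff l

/-- Auxiliary: the generalized binomial coefficient `C(z, m)`. -/
def qAux (m : ℕ) (z : ℝ) : ℝ := (descPochhammer ℝ m).eval z / m.factorial

/-- Auxiliary: the coefficient `(-1)^(j+1)/j`. -/
def cAux (j : ℕ) : ℝ := (-1) ^ (j + 1) / j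

/-- Auxiliary: `s m z = Σ_{j<m} c(j+1) q(m-1-j)(z)`. -/
def sAux (m : ℕ) (z : ℝ) : ℝ := ∑ j ∈ Finset.range m, cAux (j + 1) * qAux (m - (j + 1)) z

lemma qAux_zero (z : ℝ) : qAux 0 z = 1 := by simp [qAux]

lemma qAux_succ (m : ℕ) (z : ℝ) : qAux (m + 1) z = qAux m z * (z - m) / (m + 1) := by
  have h : (m.factorial : ℝ) ≠ 0 := Nat.cast_ne_zero.mpr m.factorial_ne_zero
  have h1 : ((m : ℝ) + 1) ≠ 0 := by positivity
  simp only [qAux, descPochhammer_succ_eval, Nat.factorial_succ, Nat.cast_mul]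
  push_cast
  field_simp

lemma qAux_succ_shift (m : ℕ) (z : ℝ) :
    qAux (m + 1) (z + 1) = qAux m z * (z + 1) / (m + 1) := by
  have h : (m.factorial : ℝ) ≠ 0 := Nat.cast_ne_zero.mpr m.factorial_ne_zero
  have h1 : ((m : ℝ) + 1) ≠ 0 := by positivity
  have he : (descPochhammer ℝ (m + 1)).eval (z + 1) =
      (z + 1) * (descPochhammer ℝ m).eval z := by
    rw [descPochhammer_succ_left]
    simp [Polynomial.eval_comp]
  simp only [qAux, he, Nat.factorial_succ, Nat.cast_mul]
  push_cast
  field_simp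

lemma altsum (n : ℕ) (z : ℝ) :
    ∑ i ∈ Finset.range (n + 1), (-1 : ℝ) ^ (n - i) * qAux i (z + 1) = qAux n z := by
  induction n with
  | zero => simp [qAux_zero]
  | succ n ih =>
    rw [Finset.sum_range_succ]
    have hstep : ∑ i ∈ Finset.range (n + 1), (-1 : ℝ) ^ (n + 1 - i) * qAux i (z + 1) =
        -∑ i ∈ Finset.range (n + 1), (-1 : ℝ) ^ (n - i) * qAux i (z + 1) := by
      rw [← Finset.sum_neg_distrib]
      apply Finset.sum_congr rfl
      intro i hi
      have hi' : i ≤ n := Nat.lt_succ_iff.mp (Finset.mem_range.mp hi)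
      have : n + 1 - i = (n - i) + 1 := by omega
      rw [this, pow_succ]
      ring
    rw [hstep, ih]
    have h1 : ((n : ℝ) + 1) ≠ 0 := by positivity
    rw [qAux_succ_shift, qAux_succ]
    simp only [Nat.sub_self, pow_zero, one_mul]
    field_simp
    ring

lemma sAux_rec (m : ℕ) (z : ℝ) :
    sAux (m + 1) z = (sAux m z * (z - m) + qAux m z) / (m + 1) := by
  have key : ∀ j ∈ Finset.range m,
      cAux (j + 1) * qAux (m + 1 - (j + 1)) z =
        cAux (j + 1) * qAux (m - (j + 1)) z * (z - m) / (m + 1) +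
          (-1 : ℝ) ^ j * qAux (m - j) (z + 1) / (m + 1) := by
    intro j hj
    have hjm : j < m := Finset.mem_range.mp hj
    obtain ⟨i, rfl⟩ : ∃ i, m = i + (j + 1) := ⟨m - (j + 1), by omega⟩
    have h1 : i + (j + 1) + 1 - (j + 1) = i + 1 := by omega
    have h2 : i + (j + 1) - (j + 1) = i := by omega
    have h3 : i + (j + 1) - j = i + 1 := by omega
    rw [h1, h2, h3, qAux_succ, qAux_succ_shift]
    have hc : cAux (j + 1) = (-1 : ℝ) ^ j / (j + 1) := by
      simp only [cAux]
      rw [show j + 1 + 1 = j + 2 from rfl, pow_add]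
      push_cast
      ring
    rw [hc]
    have hi1 : ((i : ℝ) + 1) ≠ 0 := by positivity
    have hj1 : ((j : ℝ) + 1) ≠ 0 := by positivity
    have hij : ((i : ℝ) + (j + 1) + 1) ≠ 0 := by positivity
    push_cast
    field_simp
    ring
  have hrefl : ∑ j ∈ Finset.range (m + 1), (-1 : ℝ) ^ j * qAux (m - j) (z + 1) =
      ∑ i ∈ Finset.range (m + 1), (-1 : ℝ) ^ (m - i) * qAux i (z + 1) := by
    rw [← Finset.sum_range_reflect]
    apply Finset.sum_congr rfl
    intro j hj
    have hj' : j ≤ m := Nat.lt_succ_iff.mp (Finset.mem_range.mp hj)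
    have e1 : m + 1 - 1 - j = m - j := by omega
    have e2 : m - (m - j) = j := by omega
    rw [e1, e2]
  have haltm : ∑ j ∈ Finset.range m, (-1 : ℝ) ^ j * qAux (m - j) (z + 1) =
      qAux m z - (-1 : ℝ) ^ m := by
    have := altsum m z
    rw [← hrefl] at this
    rw [Finset.sum_range_succ] at this
    have e : m - m = 0 := Nat.sub_self m
    rw [e, qAux_zero] at this
    linarith [this]
  have hcm : cAux (m + 1) = (-1 : ℝ) ^ m / (m + 1) := by
    simp only [cAux]
    rw [show m + 1 + 1 = m + 2 from rfl, pow_add]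
    push_cast
    ring
  rw [sAux, Finset.sum_range_succ, Finset.sum_congr rfl key, Finset.sum_add_distrib]
  have e0 : m + 1 - (m + 1) = 0 := Nat.sub_self (m + 1)
  rw [e0, qAux_zero, hcm]
  have hsum1 : ∑ j ∈ Finset.range m, cAux (j + 1) * qAux (m - (j + 1)) z * (z - m) / (m + 1) =
      sAux m z * (z - m) / (m + 1) := by
    rw [sAux, Finset.sum_mul, Finset.sum_div]
  have hsum2 : ∑ j ∈ Finset.range m, (-1 : ℝ) ^ j * qAux (m - j) (z + 1) / (m + 1) =
      (qAux m z - (-1 : ℝ) ^ m) / (m + 1) := by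
    rw [← Finset.sum_div, haltm]
  rw [hsum1, hsum2]
  ring

lemma qAux_hasDerivAt (m : ℕ) (z : ℝ) : HasDerivAt (fun y => qAux m y) (sAux m z) z := by
  induction m generalizing z with
  | zero =>
    have : (fun y => qAux 0 y) = fun _ : ℝ => (1 : ℝ) := funext fun y => qAux_zero y
    rw [this, show sAux 0 z = 0 by simp [sAux]]
    exact hasDerivAt_const z 1
  | succ m ih =>
    have hfun : (fun y => qAux (m + 1) y) = fun y => qAux m y * (y - m) / (m + 1) :=
      funext fun y => qAux_succ m y
    rw [hfun]
    have h1 : HasDerivAt (fun y : ℝ => y - (m : ℝ)) 1 z := (hasDerivAt_id z).sub_const _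
    have h2 := ((ih z).mul h1).div_const ((m : ℝ) + 1)
    have : (sAux m z * (z - m) + qAux m z * 1) / (m + 1) = sAux (m + 1) z := by
      rw [sAux_rec]; ring
    rw [← this]
    exact h2

lemma coeff_onePow (m : ℕ) (z : ℝ) : PowerSeries.coeff m (onePow z) = qAux m z := by
  simp [onePow, qAux]

lemma coeff_logS (m : ℕ) :
    PowerSeries.coeff m logS = if m = 0 then 0 else cAux m := by
  simp [logS, cAux]

lemma sAux_eq_coeff (m : ℕ) (z : ℝ) :
    sAux m z = PowerSeries.coeff m (logS * onePow z) := by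
  rw [PowerSeries.coeff_mul, Finset.Nat.sum_antidiagonal_eq_sum_range_succ_mk,
    Finset.sum_range_succ']
  simp only [coeff_logS, coeff_onePow]
  simp [sAux]

theorem deriv_CP (k : ℤ) (lam mu x : ℝ) (n : ℕ) (hn : 0 < n) :
    deriv (fun y => CP k lam mu y n) x =
      (n.factorial : ℝ) *
        ∑ l ∈ Finset.range n,
          ((-1 : ℝ) ^ (n - l) / ((n - l : ℕ) * (l.factorial : ℝ))) * CP k lam mu x l := by
  set G : PowerSeries ℝ := peters lam mu * compS (Lif k) logS with hG
  -- rewrite the function of y as a finite sum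
  have hfun : (fun y => CP k lam mu y n) =
      fun y => (n.factorial : ℝ) *
        ∑ p ∈ Finset.HasAntidiagonal.antidiagonal n, PowerSeries.coeff p.1 G * qAux p.2 (-y) := by
    funext y
    rw [CP, ← hG, PowerSeries.coeff_mul]
    simp only [coeff_onePow]
  -- compute the derivative
  have hderiv : HasDerivAt
      (fun y => (n.factorial : ℝ) *
        ∑ p ∈ Finset.HasAntidiagonal.antidiagonal n, PowerSeries.coeff p.1 G * qAux p.2 (-y))
      ((n.factorial : ℝ) *
        ∑ p ∈ Finset.HasAntidiagonal.antidiagonal n,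
          PowerSeries.coeff p.1 G * (sAux p.2 (-x) * (-1))) x := by
    apply HasDerivAt.const_mul
    apply HasDerivAt.fun_sum
    intro p _
    apply HasDerivAt.const_mul
    have h1 : HasDerivAt (fun y : ℝ => -y) (-1) x := hasDerivAt_neg x
    have h2 := (qAux_hasDerivAt p.2 (-x)).comp x h1
    exact h2
  rw [hfun, hderiv.deriv]
  -- now an identity of real numbers
  have hL : ∑ p ∈ Finset.HasAntidiagonal.antidiagonal n,
      PowerSeries.coeff p.1 G * (sAux p.2 (-x) * (-1)) =
      -(PowerSeries.coeff n (G * (logS * onePow (-x)))) := by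
    rw [PowerSeries.coeff_mul, ← Finset.sum_neg_distrib]
    apply Finset.sum_congr rfl
    intro p _
    rw [sAux_eq_coeff]
    ring
  rw [hL]
  -- rewrite the right-hand side
  have hR : ∑ l ∈ Finset.range n,
      ((-1 : ℝ) ^ (n - l) / ((n - l : ℕ) * (l.factorial : ℝ))) * CP k lam mu x l =
      -(PowerSeries.coeff n ((G * onePow (-x)) * logS)) := by
    rw [PowerSeries.coeff_mul, Finset.Nat.sum_antidiagonal_eq_sum_range_succ_mk,
      Finset.sum_range_succ]
    have hz : PowerSeries.coeff (n - n) logS = 0 := by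
      rw [Nat.sub_self, coeff_logS]; simp
    rw [hz, mul_zero, add_zero, ← Finset.sum_neg_distrib]
    apply Finset.sum_congr rfl
    intro l hl
    have hln : l < n := Finset.mem_range.mp hl
    have hnl : n - l ≠ 0 := by omega
    have hnl' : ((n - l : ℕ) : ℝ) ≠ 0 := Nat.cast_ne_zero.mpr hnl
    have hlf : ((l.factorial : ℕ) : ℝ) ≠ 0 := Nat.cast_ne_zero.mpr l.factorial_ne_zero
    rw [CP, ← hG, coeff_logS, if_neg hnl, cAux]
    have hpow : (-1 : ℝ) ^ (n - l + 1) = -(-1 : ℝ) ^ (n - l) := by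
      rw [pow_succ]; ring
    rw [hpow]
    field_simp
  rw [hR]
  congr 1
  congr 1
  ring
end
end

section
/- For every nonnegative integer n, Ĉ P_n^{(k)}(x;λ,μ) = Σ_{j=0}^{n} [Σ_{m=0}^{n} C(n,m) s(n-m,j) Ĉ P_m^{(k)}(0;λ,μ)] x^j, where s(·,·) denotes the signed Stirling numbers of the first kind. -/
open PowerSeries Finset

noncomputable section

lemma onePow_zero : onePow 0 = 1 := by
  ext n
  simp [onePow, descPochhammer_eval_zero, PowerSeries.coeff_one]
  split <;> simp [*]

lemma desc_eval (m n : ℕ) (hm : m ≤ n) (x : ℝ) :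
    (descPochhammer ℝ m).eval x = ∑ j ∈ Finset.range (n + 1), stirS m j * x ^ j := by
  rw [Polynomial.eval_eq_sum_range' (n := n + 1)
    (lt_of_le_of_lt (by simp [(descPochhammer_natDegree (R := ℝ) m)]) (Nat.lt_succ_of_le hm))]
  rfl

theorem CPhat_eq_sum_stirling (k : ℤ) (lam mu x : ℝ) (n : ℕ) :
    CPhat k lam mu x n =
      ∑ j ∈ Finset.range (n + 1),
        (∑ m ∈ Finset.range (n + 1),
          (n.choose m : ℝ) * stirS (n - m) j * CPhat k lam mu 0 m) * x ^ j := by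
  set F := peters lam mu * compS (Lif k) (-logS) with hF
  have hC0 : ∀ m, CPhat k lam mu 0 m = m.factorial * PowerSeries.coeff m F := by
    intro m
    simp [CPhat, hF, onePow_zero]
  have hmul : PowerSeries.coeff n (F * onePow x) =
      ∑ m ∈ Finset.range (n + 1),
        PowerSeries.coeff m F * ((descPochhammer ℝ (n - m)).eval x / (n - m).factorial) := by
    rw [PowerSeries.coeff_mul, Finset.Nat.sum_antidiagonal_eq_sum_range_succ_mk]
    simp [onePow]
  have : CPhat k lam mu x n =
      ∑ m ∈ Finset.range (n + 1), ∑ j ∈ Finset.range (n + 1),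
        (n.choose m : ℝ) * stirS (n - m) j * CPhat k lam mu 0 m * x ^ j := by
    rw [CPhat, hmul, Finset.mul_sum]
    refine Finset.sum_congr rfl fun m hm => ?_
    have hmn : m ≤ n := Nat.lt_succ_iff.mp (Finset.mem_range.mp hm)
    rw [desc_eval (n - m) n (Nat.sub_le n m) x, hC0]
    rw [Finset.sum_div, Finset.mul_sum, Finset.mul_sum]
    refine Finset.sum_congr rfl fun j _ => ?_
    have hch : (n.choose m : ℝ) = n.factorial / (m.factorial * (n - m).factorial) :=
      Nat.cast_choose ℝ hmn
    have h1 : ((n - m).factorial : ℝ) ≠ 0 := Nat.cast_ne_zero.mpr (Nat.factorial_ne_zero _)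
    have h2 : (m.factorial : ℝ) ≠ 0 := Nat.cast_ne_zero.mpr (Nat.factorial_ne_zero _)
    rw [hch]
    field_simp
  rw [this, Finset.sum_comm]
  exact Finset.sum_congr rfl fun j _ => by rw [Finset.sum_mul]
end
end
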